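/- The neural path kernel matrix factors as a Hadamard product: H_Θ = Σ ⊙ Λ_Θ, where H_Θ(s,s') = ⟨φ_{x_s,Θ}, φ_{x_{s'},Θ}⟩, Σ(s,s') = ⟨x_s, x_{s'}⟩ is the input Gram matrix, and Λ_Θ(s,s') is the number of paths active for both inputs s and s' divided by d_in. -/

import Mathlib

/-- The neural path kernel factors as a Hadamard product H_Θ = Σ ⊙ Λ_Θ :
H(s,s') = ⟨x_s, x_{s'}⟩ · Λ(s,s'), where Λ(s,s') is the number of paths active
for both inputs divided by d_in.  Paths are pairs (input node, hidden-node tuple),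
and the activity `A` depends only on the hidden part. -/
theorem npk_hadamard_factorisation (din n : ℕ) (hdin : 0 < din)
    (Hidden : Type*) [Fintype Hidden]
    (x : Fin n → Fin din → ℝ) (A : Fin n → Hidden → ℝ)
    (hA : ∀ s h, A s h = 0 ∨ A s h = 1)
    (φ : Fin n → Fin din × Hidden → ℝ)
    (hφ : ∀ s p, φ s p = x s p.1 * A s p.2)
    (H Sig Λ : Fin n → Fin n → ℝ)
    (hH : ∀ s s', H s s' = ∑ p, φ s p * φ s' p)
    (hSig : ∀ s s', Sig s s' = ∑ i, x s i * x s' i)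
    (hΛ : ∀ s s', Λ s s' =
      (Set.ncard {p : Fin din × Hidden | A s p.2 = 1 ∧ A s' p.2 = 1} : ℝ) / din) :
    ∀ s s', H s s' = Sig s s' * Λ s s' := by
  classical
  intro s s'
  -- the count of commonly active hidden tuples
  set F : Finset Hidden := Finset.univ.filter (fun h => A s h = 1 ∧ A s' h = 1) with hF
  -- ncard of the product set
  have hcount : Set.ncard {p : Fin din × Hidden | A s p.2 = 1 ∧ A s' p.2 = 1}
      = din * F.card := by
    rw [Set.ncard_eq_toFinset_card']
    have : {p : Fin din × Hidden | A s p.2 = 1 ∧ A s' p.2 = 1}.toFinset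
        = (Finset.univ : Finset (Fin din)) ×ˢ F := by
      ext ⟨i, h⟩
      simp [hF]
    rw [this, Finset.card_product, Finset.card_univ, Fintype.card_fin]
  -- sum of products of activities equals the count
  have hsumA : ∑ h, A s h * A s' h = (F.card : ℝ) := by
    have : ∀ h, A s h * A s' h
        = if (A s h = 1 ∧ A s' h = 1) then (1 : ℝ) else 0 := by
      intro h
      rcases hA s h with h1 | h1 <;> rcases hA s' h with h2 | h2 <;>
        simp [h1, h2]
    simp only [this]
    rw [Finset.sum_boole]
  have hdin' : (din : ℝ) ≠ 0 := Nat.cast_ne_zero.mpr hdin.ne'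
  rw [hH, hSig, hΛ, hcount]
  rw [Fintype.sum_prod_type]
  have : ∀ i : Fin din, ∑ h, φ s (i, h) * φ s' (i, h)
      = (x s i * x s' i) * (F.card : ℝ) := by
    intro i
    rw [← hsumA, Finset.mul_sum]
    apply Finset.sum_congr rfl
    intro h _
    rw [hφ, hφ]
    ring
  simp only [this]
  rw [← Finset.sum_mul]
  field_simp
  push_cast
  ring
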